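/- Let ψ, φ ∈ ℂ^{2^n} be unit vectors, and suppose there exist Pauli operators P, Q ∈ P_n with Pψ = ψ, Qφ = φ, and PQ = −QP. Then |⟨ψ, φ⟩| ≤ 1/√2. -/

import Mathlib

open Matrix

noncomputable section

/-- The space of `n`-qubit operators (2^n × 2^n complex matrices, indexed by bit strings). -/
abbrev QMat (n : ℕ) := Matrix (Fin n → Fin 2) (Fin n → Fin 2) ℂ

/-- The space of `n`-qubit state vectors (ℂ^{2^n}, indexed by bit strings). -/
abbrev QVec (n : ℕ) := (Fin n → Fin 2) → ℂ

def PauliX : Matrix (Fin 2) (Fin 2) ℂ := !![0, 1; 1, 0]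
def PauliY : Matrix (Fin 2) (Fin 2) ℂ := !![0, -Complex.I; Complex.I, 0]
def PauliZ : Matrix (Fin 2) (Fin 2) ℂ := !![1, 0; 0, -1]

/-- `Q` is one of the four single-qubit Pauli matrices `I, X, Y, Z`. -/
def IsSingleQubitPauli (Q : Matrix (Fin 2) (Fin 2) ℂ) : Prop :=
  Q = 1 ∨ Q = PauliX ∨ Q = PauliY ∨ Q = PauliZ

/-- Kronecker product, in qubit order, of `n` single-qubit operators. -/
def tensorn (n : ℕ) (Q : Fin n → Matrix (Fin 2) (Fin 2) ℂ) : QMat n :=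
  fun x y => ∏ j, Q j (x j) (y j)

/-- `P` is an element of the `n`-qubit Pauli group: `P = i^ℓ · Q_1 ⊗ ⋯ ⊗ Q_n`. -/
def IsPauli {n : ℕ} (P : QMat n) : Prop :=
  ∃ (ℓ : Fin 4) (Q : Fin n → Matrix (Fin 2) (Fin 2) ℂ),
    (∀ j, IsSingleQubitPauli (Q j)) ∧ P = (Complex.I ^ (ℓ : ℕ)) • tensorn n Q

lemma sqp_sq {Q : Matrix (Fin 2) (Fin 2) ℂ} (h : IsSingleQubitPauli Q) : Q * Q = 1 := by
  rcases h with h | h | h | h <;> subst h <;>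
    simp [PauliX, PauliY, PauliZ, Matrix.mul_fin_two, Complex.I_mul_I] <;>
    rw [Matrix.one_fin_two]

lemma sqp_herm {Q : Matrix (Fin 2) (Fin 2) ℂ} (h : IsSingleQubitPauli Q) : Qᴴ = Q := by
  rcases h with h | h | h | h <;> subst h <;>
    ext i j <;> fin_cases i <;> fin_cases j <;>
    simp [PauliX, PauliY, PauliZ, conjTranspose_apply]

lemma tensorn_mul (n : ℕ) (A B : Fin n → Matrix (Fin 2) (Fin 2) ℂ) :
    tensorn n A * tensorn n B = tensorn n (fun j => A j * B j) := by
  ext x y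
  simp only [tensorn, Matrix.mul_apply]
  rw [Finset.prod_univ_sum]
  simp only [Fintype.piFinset_univ]
  exact Finset.sum_congr rfl fun z _ => (Finset.prod_mul_distrib).symm

lemma tensorn_one (n : ℕ) : tensorn n (fun _ => (1 : Matrix (Fin 2) (Fin 2) ℂ)) = 1 := by
  ext x y
  simp only [tensorn, Matrix.one_apply]
  by_cases h : x = y
  · subst h; simp
  · obtain ⟨j, hj⟩ : ∃ j, x j ≠ y j := by
      by_contra hc; push_neg at hc; exact h (funext hc)
    rw [if_neg h]
    exact Finset.prod_eq_zero (Finset.mem_univ j) (by simp [hj])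

lemma tensorn_herm (n : ℕ) (A : Fin n → Matrix (Fin 2) (Fin 2) ℂ) (h : ∀ j, (A j)ᴴ = A j) :
    (tensorn n A)ᴴ = tensorn n A := by
  ext x y
  simp only [tensorn, conjTranspose_apply, star_prod]
  exact Finset.prod_congr rfl fun j _ => by rw [← conjTranspose_apply, h j]

lemma pauli_key {n : ℕ} (P : QMat n) (hP : IsPauli P) (ψ : QVec n) (hne : ψ ≠ 0)
    (hPψ : P *ᵥ ψ = ψ) : Pᴴ = P ∧ P * P = 1 := by
  obtain ⟨ℓ, A, hA, rfl⟩ := hP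
  set c : ℂ := Complex.I ^ (ℓ : ℕ) with hc
  have hT2 : tensorn n A * tensorn n A = 1 := by
    rw [tensorn_mul]
    have : (fun j => A j * A j) = fun _ => (1 : Matrix (Fin 2) (Fin 2) ℂ) := by
      funext j; exact sqp_sq (hA j)
    rw [this, tensorn_one]
  have hsq : (c • tensorn n A) * (c • tensorn n A) = (c * c) • (1 : QMat n) := by
    rw [Matrix.smul_mul, Matrix.mul_smul, hT2, smul_smul]
  have hc2 : c * c = 1 := by
    have h1 : ((c • tensorn n A) * (c • tensorn n A)) *ᵥ ψ = ψ := by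
      rw [← Matrix.mulVec_mulVec, hPψ, hPψ]
    rw [hsq] at h1
    obtain ⟨x, hx⟩ : ∃ x, ψ x ≠ 0 := by
      by_contra h; push_neg at h; exact hne (funext h)
    have h2 := congrFun h1 x
    simp only [Matrix.smul_mulVec, Matrix.one_mulVec, Pi.smul_apply,
      smul_eq_mul] at h2
    have := mul_right_cancel₀ hx (h2.trans (one_mul (ψ x)).symm)
    exact this
  have hn : c * (starRingEnd ℂ) c = 1 := by
    rw [Complex.mul_conj]
    have : Complex.normSq c = 1 := by
      rw [hc, map_pow, Complex.normSq_I, one_pow]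
    rw [this]; norm_num
  have hcr : (starRingEnd ℂ) c = c :=
    calc (starRingEnd ℂ) c = (c * c) * (starRingEnd ℂ) c := by rw [hc2, one_mul]
    _ = c * (c * (starRingEnd ℂ) c) := by ring
    _ = c := by rw [hn, mul_one]
  constructor
  · rw [Matrix.conjTranspose_smul, tensorn_herm n A (fun j => sqp_herm (hA j))]
    rw [Complex.star_def, hcr]
  · rw [hsq, hc2, one_smul]

/-- fidelity bound: if unit vectors `ψ, φ` are stabilized by
anti-commuting Pauli operators, then `|⟨ψ, φ⟩| ≤ 1/√2`. -/
theorem fidelity_bound (n : ℕ) (ψ φ : QVec n)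
    (hψ : star ψ ⬝ᵥ ψ = 1) (hφ : star φ ⬝ᵥ φ = 1)
    (P Q : QMat n) (hP : IsPauli P) (hQ : IsPauli Q)
    (hPψ : P *ᵥ ψ = ψ) (hQφ : Q *ᵥ φ = φ) (hanti : P * Q = -(Q * P)) :
    ‖star ψ ⬝ᵥ φ‖ ≤ (Real.sqrt 2)⁻¹ := by
  have hψne : ψ ≠ 0 := by rintro rfl; simp at hψ
  have hφne : φ ≠ 0 := by rintro rfl; simp at hφ
  obtain ⟨hPH, hP2⟩ := pauli_key P hP ψ hψne hPψ
  obtain ⟨hQH, hQ2⟩ := pauli_key Q hQ φ hφne hQφ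
  have hstar : star ψ ᵥ* P = star ψ := by
    conv_lhs => rw [← hPH, ← Matrix.star_mulVec, hPψ]
  -- t := ⟨φ, Pφ⟩ = 0
  have ht : star φ ⬝ᵥ (P *ᵥ φ) = 0 := by
    have h2 : Q * P * Q = -P := by
      have hQP : Q * P = -(P * Q) := by
        rw [eq_neg_iff_add_eq_zero] at hanti ⊢
        rw [add_comm]; exact hanti
      rw [hQP, neg_mul, mul_assoc, hQ2, mul_one]
    have h1 : star φ ⬝ᵥ (P *ᵥ φ) = star φ ⬝ᵥ ((Q * P * Q) *ᵥ φ) := by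
      conv_lhs => rw [← hQφ, Matrix.star_mulVec, hQH]
      rw [← Matrix.dotProduct_mulVec, Matrix.mulVec_mulVec, Matrix.mulVec_mulVec]
    rw [h2, Matrix.neg_mulVec, dotProduct_neg] at h1
    have h3 : (2 : ℂ) * (star φ ⬝ᵥ (P *ᵥ φ)) = 0 := by linear_combination h1
    exact (mul_eq_zero.mp h3).resolve_left two_ne_zero
  -- the half-projected vector
  set χ : QVec n := (2 : ℂ)⁻¹ • (φ + P *ᵥ φ) with hχ
  have hPφφ : star ψ ⬝ᵥ (P *ᵥ φ) = star ψ ⬝ᵥ φ := by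
    rw [Matrix.dotProduct_mulVec, hstar]
  have hinner : star ψ ⬝ᵥ χ = star ψ ⬝ᵥ φ := by
    rw [hχ, dotProduct_smul, dotProduct_add, hPφφ, smul_eq_mul]
    ring
  have hstarχ : star χ = (2 : ℂ)⁻¹ • (star φ + star φ ᵥ* P) := by
    rw [hχ, star_smul, star_add, Matrix.star_mulVec, hPH]
    norm_num
  have hnormχ : star χ ⬝ᵥ χ = (2 : ℂ)⁻¹ := by
    rw [hstarχ, hχ, smul_dotProduct, dotProduct_smul,
      add_dotProduct, dotProduct_add, dotProduct_add]
    rw [← Matrix.dotProduct_mulVec]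
    have h4 : star φ ᵥ* P ⬝ᵥ P *ᵥ φ = star φ ⬝ᵥ φ := by
      rw [← Matrix.dotProduct_mulVec, Matrix.mulVec_mulVec, hP2, Matrix.one_mulVec]
    rw [h4, ht, hφ, smul_eq_mul, smul_eq_mul]
    norm_num
  -- Cauchy–Schwarz via EuclideanSpace
  set x : EuclideanSpace ℂ (Fin n → Fin 2) := (WithLp.equiv 2 _).symm ψ with hx
  set y : EuclideanSpace ℂ (Fin n → Fin 2) := (WithLp.equiv 2 _).symm χ with hy
  have hixy : inner ℂ x y = star ψ ⬝ᵥ χ := by rw [dotProduct_comm]; rfl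
  have hixx : inner ℂ x x = star ψ ⬝ᵥ ψ := by rw [dotProduct_comm]; rfl
  have hiyy : inner ℂ y y = star χ ⬝ᵥ χ := by rw [dotProduct_comm]; rfl
  have hnx : ‖x‖ = 1 := by
    have := norm_eq_sqrt_re_inner (𝕜 := ℂ) x
    rw [hixx, hψ] at this
    simp at this
    exact this
  have hny : ‖y‖ = (Real.sqrt 2)⁻¹ := by
    have := norm_eq_sqrt_re_inner (𝕜 := ℂ) y
    rw [hiyy, hnormχ] at this
    simpa [Real.sqrt_inv] using this
  have hcs := norm_inner_le_norm (𝕜 := ℂ) x y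
  rw [hixy, hinner, hnx, hny, one_mul] at hcs
  simpa using hcs
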